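/- Let X be a Hausdorff space, W a finite family of continuous self-maps of X, and φ : X → X an attracting map (for every x, lim_n φ^n(x) exists and lies in Fix(φ)). Suppose Fix(φ) is a pointwise attractor of (X, W) and W(X) ⊆ Fix(φ). Then Fix(φ) is a pointwise attractor of the IFS (X, W ∪ {φ}), with pointwise basin containing B_p(Fix(φ), W). -/

import Mathlib

open Filter Topology Set

/-- Convergence of a sequence of sets in the Vietoris topology: the sequence is
eventually in every subbasic Vietoris-open set containing the limit. -/
def VConv {X : Type*} [TopologicalSpace X] (A : ℕ → Set X) (L : Set X) : Prop :=
  (∀ U : Set X, IsOpen U → L ⊆ U → ∀ᶠ n in atTop, A n ⊆ U) ∧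
  (∀ U : Set X, IsOpen U → (L ∩ U).Nonempty → ∀ᶠ n in atTop, (A n ∩ U).Nonempty)

/-- Hutchinson (Barnsley–Hutchinson) operator of a family of maps. -/
def hutch {X : Type*} (F : Set (X → X)) (S : Set X) : Set X := ⋃ f ∈ F, f '' S

/-- Strict attractor of the IFS given by the family `F`. -/
def StrictAttractor {X : Type*} [TopologicalSpace X] (F : Set (X → X)) (A : Set X) : Prop :=
  A.Nonempty ∧ IsCompact A ∧ ∃ U : Set X, IsOpen U ∧ A ⊆ U ∧
    ∀ S : Set X, S.Nonempty → IsCompact S → S ⊆ U →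
      VConv (fun n => (hutch F)^[n] S) A

/-- Pointwise basin of a set for the IFS given by `F`. -/
def pBasin {X : Type*} [TopologicalSpace X] (F : Set (X → X)) (A : Set X) : Set X :=
  {x | VConv (fun n => (hutch F)^[n] {x}) A}

/-- Pointwise attractor of the IFS given by the family `F`. -/
def PtAttractor {X : Type*} [TopologicalSpace X] (F : Set (X → X)) (A : Set X) : Prop :=
  A.Nonempty ∧ IsCompact A ∧ A ⊆ interior (pBasin F A)

/-- Kuratowski lower limit. -/
def KLi {X : Type*} [TopologicalSpace X] (A : ℕ → Set X) : Set X :=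
  {x | ∀ U : Set X, IsOpen U → x ∈ U → ∀ᶠ n in atTop, (A n ∩ U).Nonempty}

/-- Kuratowski upper limit. -/
def KLs {X : Type*} [TopologicalSpace X] (A : ℕ → Set X) : Set X :=
  {x | ∀ U : Set X, IsOpen U → x ∈ U → ∃ᶠ n in atTop, (A n ∩ U).Nonempty}

theorem pointwise_attractor_add_attracting_map {X : Type*} [TopologicalSpace X] [T2Space X]
    (W : Set (X → X)) (hW : W.Finite) (hWcont : ∀ w ∈ W, Continuous w)
    (φ : X → X) (hφ : Continuous φ)
    (hattr : ∀ x : X, ∃ y : X, φ y = y ∧ Tendsto (fun n => φ^[n] x) atTop (𝓝 y))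
    (hpt : PtAttractor W {x : X | φ x = x})
    (hWX : ∀ w ∈ W, ∀ x : X, φ (w x) = w x) :
    PtAttractor (W ∪ {φ}) {x : X | φ x = x} ∧
    pBasin W {x : X | φ x = x} ⊆ pBasin (W ∪ {φ}) {x : X | φ x = x} := by
  classical
  have hdecomp : ∀ S : Set X, hutch (W ∪ {φ}) S = hutch W S ∪ φ '' S := by
    intro S; simp [hutch, Set.biUnion_union, Set.union_comm]
  have hmono : ∀ (F : Set (X → X)) {S T : Set X}, S ⊆ T → hutch F S ⊆ hutch F T := by
    intro F S T hST
    exact Set.iUnion₂_mono fun f _ => Set.image_mono hST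
  have hWsub : ∀ S : Set X, hutch W S ⊆ hutch (W ∪ {φ}) S := by
    intro S; rw [hdecomp]; exact Set.subset_union_left
  have hWFix : ∀ S : Set X, hutch W S ⊆ {x : X | φ x = x} := by
    intro S y hy
    simp only [hutch, Set.mem_iUnion] at hy
    obtain ⟨w, hw, x, _, rfl⟩ := hy
    exact hWX w hw x
  have hiter_sub : ∀ x : X, ∀ n, (hutch W)^[n] {x} ⊆ (hutch (W ∪ {φ}))^[n] {x} := by
    intro x n
    induction n with
    | zero => simp
    | succ n ih =>
      rw [Function.iterate_succ_apply', Function.iterate_succ_apply']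
      exact (hmono W ih).trans (hWsub _)
  have hupper : ∀ x : X, ∀ n,
      (hutch (W ∪ {φ}))^[n + 1] {x} ⊆ {x : X | φ x = x} ∪ {φ^[n + 1] x} := by
    intro x n
    induction n with
    | zero =>
      rw [Function.iterate_one, hdecomp]
      apply Set.union_subset
      · exact (hWFix _).trans Set.subset_union_left
      · simp
    | succ n ih =>
      rw [Function.iterate_succ_apply', hdecomp]
      apply Set.union_subset
      · exact (hWFix _).trans Set.subset_union_left
      · rintro y ⟨z, hz, rfl⟩
        rcases ih hz with hz1 | hz1
        · left
          have : φ z = z := hz1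
          show φ (φ z) = φ z
          rw [this]; exact this
        · right
          rw [Set.mem_singleton_iff] at hz1 ⊢
          rw [hz1]
          exact (Function.iterate_succ_apply' φ (n+1) x).symm
  have hbasin : pBasin W {x : X | φ x = x} ⊆ pBasin (W ∪ {φ}) {x : X | φ x = x} := by
    intro x hx
    obtain ⟨hx1, hx2⟩ := hx
    constructor
    · intro U hU hFU
      obtain ⟨y, hy, hty⟩ := hattr x
      have hyU : y ∈ U := hFU hy
      have hev := hty.eventually (hU.mem_nhds hyU)
      filter_upwards [hev, eventually_ge_atTop 1] with n hn hn1
      obtain ⟨m, rfl⟩ := Nat.exists_eq_succ_of_ne_zero (Nat.one_le_iff_ne_zero.mp hn1)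
      exact (hupper x m).trans (Set.union_subset hFU (Set.singleton_subset_iff.mpr hn))
    · intro U hU hFU
      filter_upwards [hx2 U hU hFU] with n hn
      obtain ⟨z, hz, hzU⟩ := hn
      exact ⟨z, hiter_sub x n hz, hzU⟩
  exact ⟨⟨hpt.1, hpt.2.1, hpt.2.2.trans (interior_mono hbasin)⟩, hbasin⟩
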